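/- With the channel 𝓛_D from the long-range discrete-time walk and initial state σ₀ = |s⟩⟨s| (uniform superposition over N basis states), the ground-state overlap after m steps equals μ_g(m) = ⟨g|σ_m|g⟩ = 1/N + ((N-1)/N)·(1 - cos^{2m}(ζ)), where ζ = η√(N-1)√τ. -/

import Mathlib

open Matrix
open scoped Nat

noncomputable def ancillaTrace {N : ℕ} (M : Matrix (Fin N ⊕ Fin N) (Fin N ⊕ Fin N) ℂ) :
    Matrix (Fin N) (Fin N) ℂ :=
  M.toBlocks₁₁ + M.toBlocks₂₂

open scoped Nat

set_option maxHeartbeats 1000000 in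
lemma exp_cube {n : Type*} [Fintype n] [DecidableEq n] (X : Matrix n n ℂ) (z : ℂ) (hz : z ≠ 0)
    (h3 : X ^ 3 = (-(z ^ 2)) • X) :
    NormedSpace.exp X =
      1 + (Complex.sin z / z) • X + ((1 - Complex.cos z) / z ^ 2) • X ^ 2 := by
  have hodd : ∀ k : ℕ, X ^ (2 * k + 1) = (-(z ^ 2)) ^ k • X := by
    intro k
    induction k with
    | zero => simp
    | succ k ih =>
      have h : 2 * (k + 1) + 1 = (2 * k + 1) + 2 := by ring
      rw [h, pow_add, ih, smul_mul_assoc, ← pow_succ', h3, smul_smul, ← pow_succ]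
  have heven : ∀ k : ℕ, X ^ (2 * (k + 1)) = (-(z ^ 2)) ^ k • X ^ 2 := by
    intro k
    have h : 2 * (k + 1) = (2 * k + 1) + 1 := by ring
    rw [h, pow_succ, hodd, smul_mul_assoc, ← pow_two]
  have hOdd : HasSum (fun k : ℕ => ((2 * k + 1)! : ℂ)⁻¹ • X ^ (2 * k + 1))
      ((Complex.sin z / z) • X) := by
    have hs := ((Complex.hasSum_sin z).div_const z).smul_const X
    have he : (fun k : ℕ => ((-1 : ℂ) ^ k * z ^ (2 * k + 1) / ((2 * k + 1)! : ℂ) / z) • X)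
        = fun k : ℕ => ((2 * k + 1)! : ℂ)⁻¹ • X ^ (2 * k + 1) := by
      funext k
      rw [hodd, smul_smul]
      congr 1
      have hzz : (-(z ^ 2) : ℂ) ^ k = (-1) ^ k * z ^ (2 * k) := by
        rw [neg_pow, pow_mul]
      rw [hzz, pow_succ]
      field_simp [hz]
    rwa [he] at hs
  have hE1 : HasSum (fun k : ℕ => (((2 * (k + 1))! : ℂ))⁻¹ • X ^ (2 * (k + 1)))
      (((1 - Complex.cos z) / z ^ 2) • X ^ 2) := by
    have hc := Complex.hasSum_cos z
    have hc1 := (hasSum_nat_add_iff' 1).mpr hc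
    simp only [Finset.range_one, Finset.sum_singleton] at hc1
    norm_num at hc1
    have hc2 := (hc1.mul_right (-(1 / z ^ 2))).smul_const (X ^ 2)
    have he : (fun k : ℕ =>
        (((-1 : ℂ) ^ (k + 1) * z ^ (2 * (k + 1)) / ((2 * (k + 1))! : ℂ)) * (-(1 / z ^ 2))) • X ^ 2)
        = fun k : ℕ => (((2 * (k + 1))! : ℂ))⁻¹ • X ^ (2 * (k + 1)) := by
      funext k
      rw [heven, smul_smul]
      congr 1
      have hzz : (-(z ^ 2) : ℂ) ^ k = (-1) ^ k * z ^ (2 * k) := by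
        rw [neg_pow, pow_mul]
      have h2 : 2 * (k + 1) = 2 * k + 2 := by ring
      rw [hzz, h2, pow_succ, pow_add]
      field_simp [hz]
    rw [he] at hc2
    convert hc2 using 2
    field_simp
    ring
  have hEven : HasSum (fun k : ℕ => ((2 * k)! : ℂ)⁻¹ • X ^ (2 * k))
      (1 + ((1 - Complex.cos z) / z ^ 2) • X ^ 2) := by
    have h := (hasSum_nat_add_iff (f := fun k : ℕ => ((2 * k)! : ℂ)⁻¹ • X ^ (2 * k)) 1).mp hE1
    simpa [add_comm] using h
  have htot := HasSum.even_add_odd (f := fun k : ℕ => ((k)! : ℂ)⁻¹ • X ^ k) hEven hOdd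
  rw [NormedSpace.exp_eq_tsum (𝕂 := ℂ) (𝔸 := Matrix n n ℂ)]
  exact htot.tsum_eq.trans (by abel)

lemma vecMulVec_mulVec' {n : Type*} [Fintype n] (u v w : n → ℂ) :
    vecMulVec u v *ᵥ w = (v ⬝ᵥ w) • u := by
  funext i
  simp [mulVec, vecMulVec_apply, dotProduct, Finset.mul_sum, Finset.sum_mul, mul_comm, mul_assoc,
    mul_left_comm]

lemma vecMulVec_mul_vecMulVec {n : Type*} [Fintype n] (u v u' v' : n → ℂ) :
    vecMulVec u v * vecMulVec u' v' = (v ⬝ᵥ u') • vecMulVec u v' := by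
  ext i j
  simp [Matrix.mul_apply, vecMulVec_apply, dotProduct, Finset.mul_sum, Finset.sum_mul]
  congr 1
  funext k
  ring

lemma vecMulVec_conjT {n : Type*} (u v : n → ℂ) :
    (vecMulVec u v)ᴴ = vecMulVec (star v) (star u) := by
  ext i j
  simp [conjTranspose_apply, vecMulVec_apply, mul_comm]

lemma step_blocks {N : ℕ} (K K' ρ : Matrix (Fin N) (Fin N) ℂ) (u v w : ℂ) :
    ancillaTrace
      ((1 + u • fromBlocks 0 K' K 0 + v • fromBlocks (K' * K) 0 0 (K * K')) *
        fromBlocks ρ 0 0 0 *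
        (1 + w • fromBlocks 0 K' K 0 + v • fromBlocks (K' * K) 0 0 (K * K'))) =
      (1 + v • (K' * K)) * ρ * (1 + v • (K' * K)) + (u * w) • (K * ρ * K') := by
  have h1 : (1 : Matrix (Fin N ⊕ Fin N) (Fin N ⊕ Fin N) ℂ) = fromBlocks 1 0 0 1 :=
    (fromBlocks_one (l := Fin N) (m := Fin N) (α := ℂ)).symm
  rw [h1]
  simp only [Matrix.fromBlocks_smul, smul_zero, Matrix.fromBlocks_add, add_zero, zero_add,
    Matrix.fromBlocks_multiply]
  simp only [ancillaTrace, Matrix.toBlocks_fromBlocks₁₁, Matrix.toBlocks_fromBlocks₂₂]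
  simp only [Matrix.add_mul, Matrix.mul_add, Matrix.smul_mul, Matrix.mul_smul, Matrix.zero_mul,
    Matrix.mul_zero, Matrix.one_mul, Matrix.mul_one, add_zero, zero_add, smul_zero, smul_smul,
    Matrix.mul_assoc]
  rw [mul_comm w u]

set_option maxHeartbeats 1000000 in
/-- Ground-state overlap of the long-range discrete-time open quantum walk after `m`
steps, starting from the uniform superposition:
`μ_g(m) = 1/N + ((N-1)/N)(1 - cos^{2m} ζ)` with `ζ = η√(N-1)√τ`. -/
theorem stmt_7 (N : ℕ) (hN : 2 ≤ N) (η τ : ℝ) (hη : 0 < η) (hτ : 0 < τ)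
    (g0 : Fin N)
    (g s stilde : Fin N → ℂ)
    (hgdef : g = fun i => if i = g0 then 1 else 0)
    (hsdef : s = fun _ => ((1 / Real.sqrt N : ℝ) : ℂ))
    (hstdef : stilde = fun i => if i = g0 then 0 else ((1 / Real.sqrt ((N : ℝ) - 1) : ℝ) : ℂ))
    (L : Matrix (Fin N) (Fin N) ℂ)
    (hL : L = ((η * Real.sqrt ((N : ℝ) - 1) : ℝ) : ℂ) • vecMulVec g (star stilde))
    (Ltilde : Matrix (Fin N ⊕ Fin N) (Fin N ⊕ Fin N) ℂ)
    (hLtilde : Ltilde = fromBlocks 0 Lᴴ L 0)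
    (ζ : ℝ) (hζ : ζ = η * Real.sqrt ((N : ℝ) - 1) * Real.sqrt τ)
    (σ : ℕ → Matrix (Fin N) (Fin N) ℂ)
    (hσ0 : σ 0 = vecMulVec s (star s))
    (hσ : ∀ m : ℕ, σ (m + 1) =
      ancillaTrace
        (NormedSpace.exp ((-(Complex.I * (Real.sqrt τ : ℂ))) • Ltilde) *
          fromBlocks (σ m) 0 0 0 *
          NormedSpace.exp ((Complex.I * (Real.sqrt τ : ℂ)) • Ltilde))) :
    ∀ m : ℕ,
      star g ⬝ᵥ (σ m) *ᵥ g =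
        ((1 / (N : ℝ) + ((N : ℝ) - 1) / (N : ℝ) * (1 - Real.cos ζ ^ (2 * m)) : ℝ) : ℂ) := by
  -- basic positivity
  have hN2 : (2 : ℝ) ≤ (N : ℝ) := by exact_mod_cast hN
  have hN1 : (0 : ℝ) < (N : ℝ) - 1 := by linarith
  have hN0 : (0 : ℝ) < (N : ℝ) := by linarith
  have hsq1 : Real.sqrt ((N : ℝ) - 1) * Real.sqrt ((N : ℝ) - 1) = (N : ℝ) - 1 :=
    Real.mul_self_sqrt hN1.le
  have hsqN : Real.sqrt (N : ℝ) * Real.sqrt (N : ℝ) = (N : ℝ) :=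
    Real.mul_self_sqrt hN0.le
  have hsq1ne : Real.sqrt ((N : ℝ) - 1) ≠ 0 := by positivity
  have hsqNne : Real.sqrt (N : ℝ) ≠ 0 := by positivity
  set c : ℝ := η * Real.sqrt ((N : ℝ) - 1) with hcdef
  have hcpos : 0 < c := mul_pos hη (Real.sqrt_pos.mpr hN1)
  have hζpos : 0 < ζ := by rw [hζ]; exact mul_pos hcpos (Real.sqrt_pos.mpr hτ)
  set z : ℂ := ((ζ : ℝ) : ℂ) with hzdef
  have hzne : z ≠ 0 := Complex.ofReal_ne_zero.mpr hζpos.ne'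
  set tt : ℂ := ((Real.sqrt τ : ℝ) : ℂ) with httdef
  set cc : ℂ := ((c : ℝ) : ℂ) with hccdef
  have hzct : z = cc * tt := by rw [hzdef, hζ, hccdef, httdef]; push_cast; ring
  have htt2 : tt ^ 2 = ((τ : ℝ) : ℂ) := by
    rw [httdef, ← Complex.ofReal_pow, Real.sq_sqrt hτ.le]
  set a : ℂ := -(Complex.I * tt) with hadef
  have ha2 : a ^ 2 = -(tt ^ 2) := by
    rw [hadef]
    have : (-(Complex.I * tt)) ^ 2 = Complex.I ^ 2 * tt ^ 2 := by ring
    rw [this, Complex.I_sq]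
    ring
  -- dot product facts
  have hsum0 : ∀ y : ℂ, (∑ i : Fin N, if i = g0 then 0 else y) = ((N : ℂ) - 1) * y := by
    intro y
    have h : ∀ i : Fin N, (if i = g0 then (0 : ℂ) else y) = y - (if i = g0 then y else 0) := by
      intro i; split_ifs <;> ring
    simp_rw [h]
    rw [Finset.sum_sub_distrib, Finset.sum_const, Finset.sum_ite_eq' Finset.univ g0 fun _ => y]
    simp [Finset.card_univ, mul_comm, nsmul_eq_mul]
    ring
  have hstar_g : star g = g := by
    rw [hgdef]; funext i; simp [Pi.star_apply, apply_ite (star : ℂ → ℂ)]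
  have hstar_st : star stilde = stilde := by
    rw [hstdef]; funext i
    simp [Pi.star_apply, apply_ite (star : ℂ → ℂ), Complex.star_def, Complex.conj_ofReal]
  have hstar_s : star s = s := by
    rw [hsdef]; funext i
    simp [Pi.star_apply, Complex.star_def, Complex.conj_ofReal]
  have hdot_gg : star g ⬝ᵥ g = 1 := by
    rw [hstar_g, hgdef]
    simp [dotProduct, ite_mul, mul_ite, Finset.sum_ite_eq']
  have hdot_gst : star g ⬝ᵥ stilde = 0 := by
    rw [hstar_g, hgdef, hstdef, dotProduct]
    refine Finset.sum_eq_zero fun i _ => ?_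
    by_cases h : i = g0 <;> simp [h]
  have hdot_stg : star stilde ⬝ᵥ g = 0 := by
    rw [hstar_st, hgdef, hstdef, dotProduct]
    refine Finset.sum_eq_zero fun i _ => ?_
    by_cases h : i = g0 <;> simp [h]
  have hdot_stst : star stilde ⬝ᵥ stilde = 1 := by
    have h1 : star stilde ⬝ᵥ stilde
        = ∑ i : Fin N, if i = g0 then 0 else
            ((1 / Real.sqrt ((N : ℝ) - 1) : ℝ) : ℂ) * ((1 / Real.sqrt ((N : ℝ) - 1) : ℝ) : ℂ) := by
      rw [hstar_st, hstdef, dotProduct]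
      congr 1
      funext i
      split_ifs <;> simp
    rw [h1, hsum0, ← Complex.ofReal_mul]
    have : ((N : ℂ) - 1) = (((N : ℝ) - 1 : ℝ) : ℂ) := by push_cast; ring
    rw [this, ← Complex.ofReal_mul]
    rw [show (1 : ℂ) = ((1 : ℝ) : ℂ) by norm_num, Complex.ofReal_inj]
    field_simp
    rw [Real.sq_sqrt hN1.le]
  have hdot_gs : star g ⬝ᵥ s = ((1 / Real.sqrt N : ℝ) : ℂ) := by
    rw [hstar_g, hgdef, hsdef]
    simp [dotProduct, ite_mul, Finset.sum_ite_eq']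
  have hdot_sg : star s ⬝ᵥ g = ((1 / Real.sqrt N : ℝ) : ℂ) := by
    rw [hstar_s, hgdef, hsdef]
    simp [dotProduct, mul_ite, Finset.sum_ite_eq']
  have hdot_sts : star stilde ⬝ᵥ s
      = ((((N : ℝ) - 1) * (1 / Real.sqrt ((N : ℝ) - 1)) * (1 / Real.sqrt N) : ℝ) : ℂ) := by
    have h1 : star stilde ⬝ᵥ s
        = ∑ i : Fin N, if i = g0 then 0 else
            ((1 / Real.sqrt ((N : ℝ) - 1) : ℝ) : ℂ) * ((1 / Real.sqrt N : ℝ) : ℂ) := by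
      rw [hstar_st, hstdef, hsdef, dotProduct]
      congr 1
      funext i
      split_ifs <;> simp
    rw [h1, hsum0]
    push_cast
    ring
  have hdot_sst : star s ⬝ᵥ stilde
      = ((((N : ℝ) - 1) * (1 / Real.sqrt ((N : ℝ) - 1)) * (1 / Real.sqrt N) : ℝ) : ℂ) := by
    have h1 : star s ⬝ᵥ stilde
        = ∑ i : Fin N, if i = g0 then 0 else
            ((1 / Real.sqrt N : ℝ) : ℂ) * ((1 / Real.sqrt ((N : ℝ) - 1) : ℝ) : ℂ) := by
      rw [hstar_s, hstdef, hsdef, dotProduct]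
      congr 1
      funext i
      split_ifs <;> simp
    rw [h1, hsum0]
    push_cast
    ring
  -- matrix structure facts
  have hstarcc : star cc = cc := by rw [hccdef]; exact Complex.conj_ofReal c
  have hLH : Lᴴ = cc • vecMulVec stilde (star g) := by
    rw [hL, Matrix.conjTranspose_smul, vecMulVec_conjT, star_star, hstarcc]
  have hKK : Lᴴ * L = (cc ^ 2) • vecMulVec stilde (star stilde) := by
    rw [hLH, hL, Matrix.smul_mul, Matrix.mul_smul, smul_smul, _root_.vecMulVec_mul_vecMulVec, hdot_gg,
      one_smul, ← pow_two]
  have hKK' : L * Lᴴ = (cc ^ 2) • vecMulVec g (star g) := by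
    rw [hLH, hL, Matrix.smul_mul, Matrix.mul_smul, smul_smul, _root_.vecMulVec_mul_vecMulVec, hdot_stst,
      one_smul, ← pow_two]
  have hLt2 : Ltilde ^ 2 = fromBlocks (Lᴴ * L) 0 0 (L * Lᴴ) := by
    rw [pow_two, hLtilde, fromBlocks_multiply]
    simp
  have hLt3 : Ltilde ^ 3 = (cc ^ 2) • Ltilde := by
    have h12 : (Lᴴ * L) * Lᴴ = (cc ^ 2) • Lᴴ := by
      rw [hKK, hLH, Matrix.smul_mul, Matrix.mul_smul, _root_.vecMulVec_mul_vecMulVec, hdot_stst,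
        one_smul, smul_smul, mul_comm, ← smul_smul]
    have h21 : (L * Lᴴ) * L = (cc ^ 2) • L := by
      rw [hKK', hL, Matrix.smul_mul, Matrix.mul_smul, _root_.vecMulVec_mul_vecMulVec, hdot_gg,
        one_smul, smul_smul, mul_comm, ← smul_smul]
    have : Ltilde ^ 3 = Ltilde ^ 2 * Ltilde := pow_succ Ltilde 2
    rw [this, hLt2, hLtilde, fromBlocks_multiply]
    simp only [Matrix.zero_mul, Matrix.mul_zero, add_zero, zero_add]
    rw [h12, h21, Matrix.fromBlocks_smul]
    simp
  set sz : ℂ := Complex.sin z / z with hszdef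
  set bz : ℂ := (1 - Complex.cos z) / z ^ 2 with hbzdef
  have hsc : a ^ 3 * cc ^ 2 = -(z ^ 2) * a := by
    have h1 : a ^ 3 = a ^ 2 * a := by ring
    rw [h1, ha2, hzct]
    ring
  have h3 : (a • Ltilde) ^ 3 = (-(z ^ 2)) • (a • Ltilde) := by
    rw [smul_pow, hLt3, smul_smul, smul_smul, hsc]
  have h3' : ((-a) • Ltilde) ^ 3 = (-(z ^ 2)) • ((-a) • Ltilde) := by
    rw [smul_pow, hLt3, smul_smul, smul_smul]
    congr 1
    have : (-a) ^ 3 = -(a ^ 3) := by ring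
    rw [this]
    have := hsc
    ring_nf
    ring_nf at this
    linear_combination -this
  have hexpU : NormedSpace.exp (a • Ltilde)
      = 1 + (sz * a) • Ltilde + (bz * a ^ 2) • Ltilde ^ 2 := by
    rw [exp_cube (a • Ltilde) z hzne h3, smul_smul, smul_pow, smul_smul, hszdef, hbzdef]
  have hexpU' : NormedSpace.exp ((-a) • Ltilde)
      = 1 + (-(sz * a)) • Ltilde + (bz * a ^ 2) • Ltilde ^ 2 := by
    rw [exp_cube ((-a) • Ltilde) z hzne h3', smul_smul, smul_pow, smul_smul, hszdef, hbzdef]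
    have h1 : Complex.sin z / z * -a = -(Complex.sin z / z * a) := by ring
    have h2 : (-a) ^ 2 = a ^ 2 := by ring
    rw [h1, h2]
  -- the one-step recurrence
  have hstep : ∀ m : ℕ, σ (m + 1)
      = (1 + (bz * a ^ 2) • (Lᴴ * L)) * σ m * (1 + (bz * a ^ 2) • (Lᴴ * L))
        + ((sz * a) * (-(sz * a))) • (L * σ m * Lᴴ) := by
    intro m
    have hXa : (-(Complex.I * (Real.sqrt τ : ℂ))) • Ltilde = a • Ltilde := by
      rw [hadef, httdef]
    have hXa' : ((Complex.I * (Real.sqrt τ : ℂ))) • Ltilde = (-a) • Ltilde := by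
      rw [hadef, httdef]
      ring_nf
    rw [hσ m, hXa, hXa', hexpU, hexpU', hLt2, hLtilde]
    exact step_blocks L Lᴴ (σ m) (sz * a) (bz * a ^ 2) (-(sz * a))
  -- quadratic form recurrences
  set δ : ℂ := bz * a ^ 2 * cc ^ 2 with hδdef
  set Tst : Matrix (Fin N) (Fin N) ℂ := vecMulVec stilde (star stilde) with hTstdef
  have hPform : (1 + (bz * a ^ 2) • (Lᴴ * L)) = 1 + δ • Tst := by
    rw [hKK, smul_smul, hδdef, hTstdef]
  have hPmulvec : ∀ y : Fin N → ℂ,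
      (1 + δ • Tst) *ᵥ y = y + (δ * (star stilde ⬝ᵥ y)) • stilde := by
    intro y
    rw [Matrix.add_mulVec, Matrix.one_mulVec, Matrix.smul_mulVec, hTstdef,
      vecMulVec_mulVec', smul_smul]
  have hPg : (1 + δ • Tst) *ᵥ g = g := by
    rw [hPmulvec, hdot_stg]
    simp
  have hdotg_P : ∀ y : Fin N → ℂ, star g ⬝ᵥ (1 + δ • Tst) *ᵥ y = star g ⬝ᵥ y := by
    intro y
    rw [hPmulvec, dotProduct_add, dotProduct_smul, hdot_gst]
    simp
  have hdotst_P : ∀ y : Fin N → ℂ,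
      star stilde ⬝ᵥ (1 + δ • Tst) *ᵥ y = (1 + δ) * (star stilde ⬝ᵥ y) := by
    intro y
    rw [hPmulvec, dotProduct_add, dotProduct_smul, hdot_stst, smul_eq_mul]
    ring
  have hLHg : Lᴴ *ᵥ g = cc • stilde := by
    rw [hLH, Matrix.smul_mulVec, vecMulVec_mulVec', hdot_gg, one_smul]
  have hLHst : Lᴴ *ᵥ stilde = 0 := by
    rw [hLH, Matrix.smul_mulVec, vecMulVec_mulVec', hdot_gst]
    simp
  have hterm2 : ∀ ρ : Matrix (Fin N) (Fin N) ℂ,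
      star g ⬝ᵥ (L * ρ * Lᴴ) *ᵥ g = cc ^ 2 * (star stilde ⬝ᵥ ρ *ᵥ stilde) := by
    intro ρ
    rw [← Matrix.mulVec_mulVec, ← Matrix.mulVec_mulVec, hLHg, Matrix.mulVec_smul, hL,
      Matrix.smul_mulVec, vecMulVec_mulVec']
    simp only [dotProduct_smul, smul_eq_mul, hdot_gg, mul_one]
    ring
  have hμrec : ∀ m : ℕ, star g ⬝ᵥ σ (m + 1) *ᵥ g
      = star g ⬝ᵥ σ m *ᵥ g
        + (-((sz * a) * (sz * a)) * cc ^ 2) * (star stilde ⬝ᵥ σ m *ᵥ stilde) := by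
    intro m
    rw [hstep m, hPform, Matrix.add_mulVec, dotProduct_add]
    congr 1
    · rw [← Matrix.mulVec_mulVec, ← Matrix.mulVec_mulVec, hPg, hdotg_P]
    · rw [Matrix.smul_mulVec, dotProduct_smul, hterm2, smul_eq_mul]
      ring
  have hνrec : ∀ m : ℕ, star stilde ⬝ᵥ σ (m + 1) *ᵥ stilde
      = (1 + δ) ^ 2 * (star stilde ⬝ᵥ σ m *ᵥ stilde) := by
    intro m
    rw [hstep m, hPform, Matrix.add_mulVec, dotProduct_add]
    have h2 : star stilde ⬝ᵥ ((sz * a * -(sz * a)) • (L * σ m * Lᴴ)) *ᵥ stilde = 0 := by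
      rw [Matrix.smul_mulVec, dotProduct_smul, ← Matrix.mulVec_mulVec,
        ← Matrix.mulVec_mulVec, hLHst]
      simp
    have hPst : (1 + δ • Tst) *ᵥ stilde = (1 + δ) • stilde := by
      rw [hPmulvec, hdot_stst, mul_one, add_smul, one_smul]
    rw [h2, add_zero, ← Matrix.mulVec_mulVec, ← Matrix.mulVec_mulVec, hPst,
      Matrix.mulVec_smul, Matrix.mulVec_smul, dotProduct_smul, hdotst_P, smul_eq_mul]
    ring
  -- scalar simplifications
  have hcosz : Complex.cos z = ((Real.cos ζ : ℝ) : ℂ) := by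
    rw [hzdef, Complex.ofReal_cos]
  have hsinz : Complex.sin z = ((Real.sin ζ : ℝ) : ℂ) := by
    rw [hzdef, Complex.ofReal_sin]
  have hz2 : z ^ 2 = cc ^ 2 * tt ^ 2 := by rw [hzct]; ring
  have hδval : 1 + δ = ((Real.cos ζ : ℝ) : ℂ) := by
    rw [hδdef, hbzdef, ha2, ← hcosz]
    field_simp
    rw [hz2]
    ring
  have hsinval : -((sz * a) * (sz * a)) * cc ^ 2 = ((Real.sin ζ : ℝ) : ℂ) ^ 2 := by
    have h1 : -((sz * a) * (sz * a)) * cc ^ 2 = -(sz ^ 2 * a ^ 2 * cc ^ 2) := by ring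
    rw [h1, hszdef, ha2, ← hsinz]
    field_simp
    rw [hz2]
    ring
  -- main induction
  have main : ∀ m : ℕ,
      star g ⬝ᵥ σ m *ᵥ g
        = ((1 / (N : ℝ) + ((N : ℝ) - 1) / (N : ℝ) * (1 - Real.cos ζ ^ (2 * m)) : ℝ) : ℂ)
      ∧ star stilde ⬝ᵥ σ m *ᵥ stilde
        = ((((N : ℝ) - 1) / (N : ℝ) * Real.cos ζ ^ (2 * m) : ℝ) : ℂ) := by
    intro m
    induction m with
    | zero =>
      constructor
      · rw [hσ0, vecMulVec_mulVec', dotProduct_smul, smul_eq_mul, hdot_sg, hdot_gs,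
          ← Complex.ofReal_mul, Complex.ofReal_inj]
        norm_num
        field_simp
        rw [Real.sq_sqrt hN0.le]
      · rw [hσ0, vecMulVec_mulVec', dotProduct_smul, smul_eq_mul, hdot_sst, hdot_sts,
          ← Complex.ofReal_mul, Complex.ofReal_inj]
        norm_num
        field_simp
        rw [Real.sq_sqrt hN0.le, Real.sq_sqrt hN1.le, mul_comm]
    | succ m ih =>
      constructor
      · rw [hμrec m, ih.1, ih.2, hsinval, ← Complex.ofReal_pow, ← Complex.ofReal_mul,
          ← Complex.ofReal_add, Complex.ofReal_inj]
        have hs2 : Real.sin ζ ^ 2 = 1 - Real.cos ζ ^ 2 := Real.sin_sq ζ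
        rw [hs2]
        ring
      · rw [hνrec m, ih.2, hδval, ← Complex.ofReal_pow, ← Complex.ofReal_mul,
          Complex.ofReal_inj]
        ring
  intro m
  exact (main m).1
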